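/- arXiv:1705.06113 — 3 statements merged into one kernel-verified Lean document; each statement's English description precedes it below -/
import Mathlib

section
/- (Markov inequality implies CVaR-style bound via explicit μ) Let Z be an integrable real random variable with Z ≥ −c almost surely for some c > 0, and suppose E[Z + c] ≤ ρ c for ρ ∈ (0,1). Then choosing μ = −c gives μ + ρ^{-1} E[(Z − μ)⁺] = −c + ρ^{-1} E[Z + c] ≤ 0, hence CVaR_ρ(Z) ≤ 0 and Pr(Z ≤ 0) ≥ 1 − ρ. -/
open MeasureTheory

/-- Markov inequality gives the CVaR-style certificate with `μ = −c`:
if `Z ≥ −c` a.s. and `E[Z + c] ≤ ρc`, then `−c + ρ⁻¹E[(Z+c)⁺] ≤ 0`, hence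
`CVaR_ρ(Z) ≤ 0` and `Pr(Z ≤ 0) ≥ 1 − ρ`. -/
theorem stmt8 {α : Type*} [MeasurableSpace α] (μ : Measure α) [IsProbabilityMeasure μ]
    (Z : α → ℝ) (hint : Integrable Z μ) (c ρ : ℝ) (hc : 0 < c)
    (hρ : ρ ∈ Set.Ioo (0 : ℝ) 1)
    (hZ : ∀ᵐ a ∂μ, -c ≤ Z a)
    (hE : ∫ a, (Z a + c) ∂μ ≤ ρ * c) :
    (-c + ρ⁻¹ * ∫ a, max (Z a - (-c)) 0 ∂μ = -c + ρ⁻¹ * ∫ a, (Z a + c) ∂μ) ∧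
    (-c + ρ⁻¹ * ∫ a, max (Z a - (-c)) 0 ∂μ ≤ 0) ∧
    sInf {y : ℝ | ∃ m : ℝ, y = m + ρ⁻¹ * ∫ a, max (Z a - m) 0 ∂μ} ≤ 0 ∧
    1 - ρ ≤ (μ {a | Z a ≤ 0}).toReal := by
  obtain ⟨hρ0, hρ1⟩ := hρ
  have hintc : Integrable (fun a => Z a + c) μ := hint.add (integrable_const c)
  have hnn : 0 ≤ᵐ[μ] fun a => Z a + c := by
    refine hZ.mono fun a ha => ?_
    simp only [Pi.zero_apply]
    linarith
  have heq : (∫ a, max (Z a - (-c)) 0 ∂μ) = ∫ a, (Z a + c) ∂μ := by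
    refine integral_congr_ae (hZ.mono fun a ha => ?_)
    show max (Z a - (-c)) 0 = Z a + c
    rw [max_eq_left (by linarith)]; ring
  have h1 : -c + ρ⁻¹ * ∫ a, max (Z a - (-c)) 0 ∂μ = -c + ρ⁻¹ * ∫ a, (Z a + c) ∂μ := by
    rw [heq]
  have h2 : -c + ρ⁻¹ * ∫ a, max (Z a - (-c)) 0 ∂μ ≤ 0 := by
    rw [h1]
    have : ρ⁻¹ * ∫ a, (Z a + c) ∂μ ≤ ρ⁻¹ * (ρ * c) := by
      exact mul_le_mul_of_nonneg_left hE (le_of_lt (inv_pos.mpr hρ0))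
    rw [inv_mul_cancel_left₀ (ne_of_gt hρ0)] at this
    linarith
  refine ⟨h1, h2, ?_, ?_⟩
  · set S : Set ℝ := {y : ℝ | ∃ m : ℝ, y = m + ρ⁻¹ * ∫ a, max (Z a - m) 0 ∂μ}
    by_cases hbdd : BddBelow S
    · have hmem : (-c + ρ⁻¹ * ∫ a, max (Z a - (-c)) 0 ∂μ) ∈ S := ⟨-c, rfl⟩
      exact le_trans (csInf_le hbdd hmem) h2
    · rw [Real.sInf_of_not_bddBelow hbdd]
  · -- Markov
    have hmark := mul_meas_ge_le_integral_of_nonneg hnn hintc c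
    have hle : (μ {x | c ≤ Z x + c}).toReal ≤ ρ := by
      have h : c * (μ {x | c ≤ Z x + c}).toReal ≤ ρ * c := le_trans hmark hE
      nlinarith [h]
    have hsub : {a | ¬ (Z a ≤ 0)} ⊆ {x | c ≤ Z x + c} := by
      intro a ha
      simp only [Set.mem_setOf_eq, not_le] at ha ⊢
      linarith
    have hcompl : (μ {a | ¬ (Z a ≤ 0)}).toReal ≤ ρ :=
      le_trans (ENNReal.toReal_mono (measure_ne_top μ _) (measure_mono hsub)) hle
    have huniv : (1 : ENNReal) ≤ μ {a | Z a ≤ 0} + μ {a | ¬ (Z a ≤ 0)} := by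
      calc (1 : ENNReal) = μ Set.univ := (measure_univ).symm
        _ ≤ μ ({a | Z a ≤ 0} ∪ {a | ¬ (Z a ≤ 0)}) := by
            apply measure_mono; intro a _; by_cases h : Z a ≤ 0
            · exact Or.inl h
            · exact Or.inr h
        _ ≤ _ := measure_union_le _ _
    have h1' : (1 : ℝ) ≤ (μ {a | Z a ≤ 0}).toReal + (μ {a | ¬ (Z a ≤ 0)}).toReal := by
      have := ENNReal.toReal_mono (by
        exact ENNReal.add_ne_top.mpr ⟨measure_ne_top μ _, measure_ne_top μ _⟩) huniv
      rwa [ENNReal.toReal_one, ENNReal.toReal_add (measure_ne_top μ _) (measure_ne_top μ _)] at this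
    linarith
end

section
/- (Quadratic function epigraph matrix condition) Let g(h) = h^H B h − c for h ∈ ℂ^n with B Hermitian and c ∈ ℝ, and let μ ∈ ℝ. A Hermitian matrix M ∈ ℂ^{(n+1)×(n+1)} satisfies [h^H, 1] M [h; 1] ≥ g(h) − μ for all h ∈ ℂ^n if and only if M ⪰ [[B, 0],[0, −c − μ]]. -/
open scoped ComplexOrder

open Matrix

namespace Stmt9Aux

lemma star_elim {α β : Type*} (a : α → ℂ) (b : β → ℂ) :
    star (Sum.elim a b) = Sum.elim (star a) (star b) :=
  funext fun i => by cases i <;> rfl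

lemma herm_form_star {m : Type*} [Fintype m] {N : Matrix m m ℂ} (hN : N.IsHermitian)
    (x : m → ℂ) : star (star x ⬝ᵥ N *ᵥ x) = star x ⬝ᵥ N *ᵥ x := by
  rw [← star_dotProduct, star_mulVec, hN.eq, ← dotProduct_mulVec]

lemma herm_form_im {m : Type*} [Fintype m] {N : Matrix m m ℂ} (hN : N.IsHermitian)
    (x : m → ℂ) : (star x ⬝ᵥ N *ᵥ x).im = 0 := by
  have := herm_form_star hN x
  rw [← Complex.conj_eq_iff_im]
  exact this

lemma block_form {n : ℕ} (B : Matrix (Fin n) (Fin n) ℂ) (D : Matrix (Fin 1) (Fin 1) ℂ)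
    (h : Fin n → ℂ) :
    star (Sum.elim h fun _ => (1 : ℂ)) ⬝ᵥ
      (fromBlocks B 0 0 D) *ᵥ (Sum.elim h fun _ => (1 : ℂ)) =
    star h ⬝ᵥ B *ᵥ h + D 0 0 := by
  rw [star_elim, fromBlocks_mulVec, sumElim_dotProduct_sumElim]
  simp [mulVec, dotProduct, Fin.sum_univ_one]

lemma quad_nonneg {A β γ : ℝ} (hq : ∀ s : ℝ, 0 ≤ s ^ 2 * A + s * β + γ) : 0 ≤ A := by
  by_contra hA
  push_neg at hA
  set s : ℝ := max 1 ((|β| + |γ| + 1) / (-A)) with hs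
  have hs1 : (1 : ℝ) ≤ s := le_max_left _ _
  have hs0 : (0 : ℝ) < s := lt_of_lt_of_le one_pos hs1
  have h2 : |β| + |γ| + 1 ≤ s * (-A) := by
    have := le_max_right 1 ((|β| + |γ| + 1) / (-A))
    calc |β| + |γ| + 1 = ((|β| + |γ| + 1) / (-A)) * (-A) :=
          (div_mul_cancel₀ _ (by linarith : -A ≠ 0)).symm
      _ ≤ s * (-A) := by
          apply mul_le_mul_of_nonneg_right this (by linarith)
  have hq' := hq s
  nlinarith [le_abs_self β, le_abs_self γ, abs_nonneg β, abs_nonneg γ,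
    mul_le_mul_of_nonneg_left h2 hs0.le]

end Stmt9Aux

open Stmt9Aux

/-- Epigraph matrix condition for a quadratic function: a Hermitian `M`
satisfies `[h;1]ᴴ M [h;1] ≥ hᴴBh − c − μ` for all `h` iff
`M ⪰ [[B,0],[0,−c−μ]]`. -/
theorem stmt9 {n : ℕ} (B : Matrix (Fin n) (Fin n) ℂ) (hB : B.IsHermitian)
    (c μ' : ℝ)
    (M : Matrix (Fin n ⊕ Fin 1) (Fin n ⊕ Fin 1) ℂ) (hM : M.IsHermitian) :
    (∀ h : Fin n → ℂ,
      (star h ⬝ᵥ B.mulVec h).re - c - μ' ≤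
        (star (Sum.elim h fun _ => (1 : ℂ)) ⬝ᵥ
          M.mulVec (Sum.elim h fun _ => (1 : ℂ))).re) ↔
    (M - fromBlocks B 0 0 (Matrix.of fun _ _ => ((-c - μ' : ℝ) : ℂ))).PosSemidef := by
  set D : Matrix (Fin 1) (Fin 1) ℂ := Matrix.of fun _ _ => ((-c - μ' : ℝ) : ℂ) with hD
  set N : Matrix (Fin n ⊕ Fin 1) (Fin n ⊕ Fin 1) ℂ := M - fromBlocks B 0 0 D with hNdef
  have hDh : D.IsHermitian := by
    ext i j
    simp [hD, Matrix.conjTranspose_apply]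
  have hFB : (fromBlocks B 0 0 D).IsHermitian := by
    unfold Matrix.IsHermitian
    rw [fromBlocks_conjTranspose, conjTranspose_zero, conjTranspose_zero, hB.eq, hDh.eq]
  have hN : N.IsHermitian := hM.sub hFB
  have form_eq : ∀ h : Fin n → ℂ,
      (star (Sum.elim h fun _ => (1 : ℂ)) ⬝ᵥ N *ᵥ (Sum.elim h fun _ => (1 : ℂ))).re =
      (star (Sum.elim h fun _ => (1 : ℂ)) ⬝ᵥ M *ᵥ (Sum.elim h fun _ => (1 : ℂ))).re -
        (star h ⬝ᵥ B *ᵥ h).re - (-c - μ') := by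
    intro h
    rw [hNdef, sub_mulVec, dotProduct_sub, Complex.sub_re, block_form]
    simp [hD, Complex.add_re]
    ring
  constructor
  · intro H
    have K : ∀ h : Fin n → ℂ,
        0 ≤ (star (Sum.elim h fun _ => (1 : ℂ)) ⬝ᵥ N *ᵥ (Sum.elim h fun _ => (1 : ℂ))).re := by
      intro h
      have := H h
      rw [form_eq]
      linarith
    refine Matrix.posSemidef_iff_dotProduct_mulVec.mpr ⟨hN, fun x => ?_⟩
    rw [Complex.nonneg_iff]
    refine ⟨?_, (herm_form_im hN x).symm⟩
    set v : Fin n → ℂ := fun i => x (Sum.inl i) with hv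
    set t : ℂ := x (Sum.inr 0) with htdef
    have hx : x = Sum.elim v fun _ => t := by
      funext i
      cases i with
      | inl i => rfl
      | inr i =>
        have : i = 0 := Subsingleton.elim _ _
        rw [this]
        rfl
    by_cases ht : t = 0
    · -- quadratic in a real parameter
      set e : (Fin n ⊕ Fin 1) → ℂ := Sum.elim (0 : Fin n → ℂ) (fun _ => (1 : ℂ)) with he
      have hy : ∀ s : ℝ, (Sum.elim ((s : ℂ) • v) fun _ => (1 : ℂ)) = (s : ℂ) • x + e := by
        intro s
        funext i
        cases i with
        | inl i => simp [hx, he]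
        | inr i => simp [hx, he, ht]
      set a : ℂ := star x ⬝ᵥ N *ᵥ x with ha
      set b : ℂ := star x ⬝ᵥ N *ᵥ e with hb
      set c' : ℂ := star e ⬝ᵥ N *ᵥ x with hc'
      set γ : ℂ := star e ⬝ᵥ N *ᵥ e with hγ
      have hqs : ∀ s : ℝ,
          (star (Sum.elim ((s : ℂ) • v) fun _ => (1 : ℂ)) ⬝ᵥ
            N *ᵥ (Sum.elim ((s : ℂ) • v) fun _ => (1 : ℂ))).re =
          s ^ 2 * a.re + s * (b.re + c'.re) + γ.re := by
        intro s
        rw [hy s]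
        simp only [star_add, star_smul, mulVec_add, mulVec_smul, add_dotProduct,
          dotProduct_add, smul_dotProduct, dotProduct_smul]
        simp only [smul_eq_mul, star_trivial, Complex.star_def, Complex.conj_ofReal,
          Complex.add_re, Complex.mul_re, Complex.ofReal_re, Complex.ofReal_im, ha, hb, hc', hγ]
        ring
      have : 0 ≤ a.re := by
        apply quad_nonneg (β := b.re + c'.re) (γ := γ.re)
        intro s
        rw [← hqs s]
        exact K _
      exact this
    · -- scale by t ≠ 0
      set y : (Fin n ⊕ Fin 1) → ℂ := Sum.elim (t⁻¹ • v) fun _ => (1 : ℂ) with hy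
      have hxt : x = t • y := by
        funext i
        cases i with
        | inl i =>
          simp only [hx, hy, Sum.elim_inl, Pi.smul_apply, smul_eq_mul]
          field_simp
        | inr i =>
          simp [hx, hy]
      have hval : star x ⬝ᵥ N *ᵥ x = ((Complex.normSq t : ℝ) : ℂ) * (star y ⬝ᵥ N *ᵥ y) := by
        rw [hxt, star_smul, mulVec_smul, smul_dotProduct, dotProduct_smul]
        simp only [smul_eq_mul, Complex.star_def]
        rw [← mul_assoc, mul_comm ((starRingEnd ℂ) t) t, Complex.mul_conj]
      rw [hval, Complex.re_ofReal_mul]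
      exact mul_nonneg (Complex.normSq_nonneg t) (K _)
  · intro hPSD h
    have h0 := hPSD.dotProduct_mulVec_nonneg (Sum.elim h fun _ => (1 : ℂ))
    rw [Complex.nonneg_iff] at h0
    have := h0.1
    rw [form_eq] at this
    linarith
end

section
/- (Feasible-set inclusion of the two robust reformulations) Suppose (Q̂₁, Q̂₂, t̂) satisfies the Markov-approach constraint Tr(B̂₁Γ₁ + B̂₂Γ₂) ≤ (t̂ + β − α) ρ ln 2 with B̂ᵢ = A_e^T ⊗ Q̂ᵢ ⪰ 0 and Γᵢ ⪰ 0, where t̂ + β − α > 0. Then setting M̂ = diag(B̂₁, B̂₂, 0) and μ̂ = −(t̂ + β − α) ln 2, the SDP-approach constraints hold: M̂ ⪰ 0, M̂ ⪰ [[diag(B̂₁,B̂₂), 0],[0, −(t̂+β−α)ln 2 − μ̂]], and μ̂ + ρ^{-1}Tr(Π M̂) ≤ 0, where Π = diag(Ω₁,Ω₂,0) + vv^H with v = (h̄₁+φ₁; h̄₂+φ₂; 1) and Γᵢ = Ωᵢ + (h̄ᵢ+φᵢ)(h̄ᵢ+φᵢ)^H. -/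
open scoped ComplexOrder

open Matrix Kronecker

lemma kron_psd {p m : ℕ} {A : Matrix (Fin p) (Fin p) ℂ} {Q : Matrix (Fin m) (Fin m) ℂ}
    (hA : A.PosSemidef) (hQ : Q.PosSemidef) : (A ⊗ₖ Q).PosSemidef := by
  exact hA.kronecker hQ

lemma star_sum_elim {l m : Type*} (a : l → ℂ) (b : m → ℂ) :
    star (Sum.elim a b) = Sum.elim (star a) (star b) := by
  funext x; cases x <;> rfl

lemma fromBlocks_diag_psd {l m : Type*} [Fintype l] [Fintype m]
    {A : Matrix l l ℂ} {D : Matrix m m ℂ} (hA : A.PosSemidef) (hD : D.PosSemidef) :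
    (Matrix.fromBlocks A 0 0 D).PosSemidef := by
  refine Matrix.PosSemidef.of_dotProduct_mulVec_nonneg ?_ ?_
  · unfold Matrix.IsHermitian
    rw [Matrix.fromBlocks_conjTranspose, hA.1, hD.1]
    simp
  · intro x
    have hx : x = Sum.elim (x ∘ Sum.inl) (x ∘ Sum.inr) := by
      funext y; cases y <;> rfl
    rw [hx, Matrix.fromBlocks_mulVec, star_sum_elim, sumElim_dotProduct_sumElim]
    simp only [Matrix.zero_mulVec, add_zero, zero_add]
    exact add_nonneg (hA.dotProduct_mulVec_nonneg _) (hD.dotProduct_mulVec_nonneg _)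

lemma trace_fromBlocks' {l m : Type*} [Fintype l] [Fintype m]
    (A : Matrix l l ℂ) (B : Matrix l m ℂ) (C : Matrix m l ℂ) (D : Matrix m m ℂ) :
    (Matrix.fromBlocks A B C D).trace = A.trace + D.trace := by
  simp [Matrix.trace, Matrix.diag, Fintype.sum_sum_type]

lemma trace_vecMulVec_mul {l : Type*} [Fintype l] (v w : l → ℂ) (M : Matrix l l ℂ) :
    (Matrix.vecMulVec v w * M).trace = v ⬝ᵥ (w ᵥ* M) := by
  simp only [Matrix.trace, Matrix.diag, Matrix.mul_apply, Matrix.vecMulVec_apply,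
    dotProduct, Matrix.vecMul, Finset.mul_sum, mul_assoc]

/-- Feasible-set inclusion (Lemma 2): a feasible point of the Markov-approach
constraint yields, via `M̂ = diag(B̂₁,B̂₂,0)` and `μ̂ = −(t̂+β−α)ln 2`, a
feasible point of the SDP-approach constraints. -/
theorem stmt15 {p m n : ℕ} (Ae : Matrix (Fin p) (Fin p) ℂ) (hAe : Ae.PosSemidef)
    (Q₁ : Matrix (Fin m) (Fin m) ℂ) (Q₂ : Matrix (Fin n) (Fin n) ℂ)
    (hQ₁ : Q₁.PosSemidef) (hQ₂ : Q₂.PosSemidef)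
    (Ω₁ : Matrix (Fin p × Fin m) (Fin p × Fin m) ℂ) (hΩ₁ : Ω₁.PosSemidef)
    (Ω₂ : Matrix (Fin p × Fin n) (Fin p × Fin n) ℂ) (hΩ₂ : Ω₂.PosSemidef)
    (hb₁ φ₁ : Fin p × Fin m → ℂ) (hb₂ φ₂ : Fin p × Fin n → ℂ)
    (ρ α β t : ℝ) (hρ : ρ ∈ Set.Ioo (0 : ℝ) 1) (ht : 0 < t + β - α)
    (B₁ : Matrix (Fin p × Fin m) (Fin p × Fin m) ℂ) (hB₁ : B₁ = Aeᵀ ⊗ₖ Q₁)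
    (B₂ : Matrix (Fin p × Fin n) (Fin p × Fin n) ℂ) (hB₂ : B₂ = Aeᵀ ⊗ₖ Q₂)
    (Γ₁ : Matrix (Fin p × Fin m) (Fin p × Fin m) ℂ)
    (hΓ₁ : Γ₁ = Ω₁ + vecMulVec (hb₁ + φ₁) (star (hb₁ + φ₁)))
    (Γ₂ : Matrix (Fin p × Fin n) (Fin p × Fin n) ℂ)
    (hΓ₂ : Γ₂ = Ω₂ + vecMulVec (hb₂ + φ₂) (star (hb₂ + φ₂)))
    (hfeas : (B₁ * Γ₁).trace.re + (B₂ * Γ₂).trace.re ≤ (t + β - α) * ρ * Real.log 2)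
    (v : ((Fin p × Fin m) ⊕ (Fin p × Fin n)) ⊕ Fin 1 → ℂ)
    (hv : v = Sum.elim (Sum.elim (hb₁ + φ₁) (hb₂ + φ₂)) fun _ => 1)
    (Pm : Matrix (((Fin p × Fin m) ⊕ (Fin p × Fin n)) ⊕ Fin 1)
      (((Fin p × Fin m) ⊕ (Fin p × Fin n)) ⊕ Fin 1) ℂ)
    (hPm : Pm = fromBlocks (fromBlocks Ω₁ 0 0 Ω₂) 0 0 0 + vecMulVec v (star v))
    (M : Matrix (((Fin p × Fin m) ⊕ (Fin p × Fin n)) ⊕ Fin 1)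
      (((Fin p × Fin m) ⊕ (Fin p × Fin n)) ⊕ Fin 1) ℂ)
    (hM : M = fromBlocks (fromBlocks B₁ 0 0 B₂) 0 0 0)
    (μ' : ℝ) (hμ : μ' = -((t + β - α) * Real.log 2)) :
    M.PosSemidef ∧
    (M - fromBlocks (fromBlocks B₁ 0 0 B₂) 0 0
      (Matrix.of fun _ _ => ((-((t + β - α) * Real.log 2) - μ' : ℝ) : ℂ))).PosSemidef ∧
    μ' + ρ⁻¹ * (Pm * M).trace.re ≤ 0 := by
  obtain ⟨hρ0, hρ1⟩ := hρ
  have hB₁psd : B₁.PosSemidef := hB₁ ▸ kron_psd hAe.transpose hQ₁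
  have hB₂psd : B₂.PosSemidef := hB₂ ▸ kron_psd hAe.transpose hQ₂
  refine ⟨?_, ?_, ?_⟩
  · rw [hM]
    exact fromBlocks_diag_psd (fromBlocks_diag_psd hB₁psd hB₂psd) Matrix.PosSemidef.zero
  · have h0 : M - fromBlocks (fromBlocks B₁ 0 0 B₂) 0 0
        (Matrix.of fun _ _ => ((-((t + β - α) * Real.log 2) - μ' : ℝ) : ℂ)) = 0 := by
      rw [hM, hμ]
      have : (Matrix.of fun _ _ => ((-((t + β - α) * Real.log 2) -
          (-((t + β - α) * Real.log 2)) : ℝ) : ℂ)) = (0 : Matrix (Fin 1) (Fin 1) ℂ) := by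
        ext i j; simp
      rw [this, sub_self]
    rw [h0]
    exact Matrix.PosSemidef.zero
  · -- trace identity
    have tr1 : (B₁ * Γ₁).trace = (B₁ * Ω₁).trace +
        (hb₁ + φ₁) ⬝ᵥ (star (hb₁ + φ₁) ᵥ* B₁) := by
      rw [hΓ₁, mul_add, Matrix.trace_add,
        Matrix.trace_mul_comm B₁ (vecMulVec (hb₁ + φ₁) (star (hb₁ + φ₁))),
        trace_vecMulVec_mul]
    have tr2 : (B₂ * Γ₂).trace = (B₂ * Ω₂).trace +
        (hb₂ + φ₂) ⬝ᵥ (star (hb₂ + φ₂) ᵥ* B₂) := by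
      rw [hΓ₂, mul_add, Matrix.trace_add,
        Matrix.trace_mul_comm B₂ (vecMulVec (hb₂ + φ₂) (star (hb₂ + φ₂))),
        trace_vecMulVec_mul]
    have key : (Pm * M).trace = (B₁ * Γ₁).trace + (B₂ * Γ₂).trace := by
      rw [hPm, hM, add_mul, Matrix.trace_add]
      have trD : ((fromBlocks (fromBlocks Ω₁ 0 0 Ω₂) 0 0
          (0 : Matrix (Fin 1) (Fin 1) ℂ)) * fromBlocks (fromBlocks B₁ 0 0 B₂) 0 0 0).trace
          = (B₁ * Ω₁).trace + (B₂ * Ω₂).trace := by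
        simp only [Matrix.fromBlocks_multiply, Matrix.zero_mul, Matrix.mul_zero,
          add_zero, zero_add, trace_fromBlocks']
        rw [Matrix.trace_mul_comm Ω₁, Matrix.trace_mul_comm Ω₂]
        simp
      have trV : (vecMulVec v (star v) * fromBlocks (fromBlocks B₁ 0 0 B₂) 0 0 0).trace
          = (hb₁ + φ₁) ⬝ᵥ (star (hb₁ + φ₁) ᵥ* B₁) +
            (hb₂ + φ₂) ⬝ᵥ (star (hb₂ + φ₂) ᵥ* B₂) := by
        rw [trace_vecMulVec_mul, hv, star_sum_elim, star_sum_elim,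
          Matrix.vecMul_fromBlocks, Matrix.vecMul_fromBlocks]
        simp [sumElim_dotProduct_sumElim]
      rw [trD, trV, tr1, tr2]
      ring
    have hre : (Pm * M).trace.re = (B₁ * Γ₁).trace.re + (B₂ * Γ₂).trace.re := by
      rw [key, Complex.add_re]
    rw [hre, hμ]
    have hmul : ρ⁻¹ * ((B₁ * Γ₁).trace.re + (B₂ * Γ₂).trace.re)
        ≤ ρ⁻¹ * ((t + β - α) * ρ * Real.log 2) :=
      mul_le_mul_of_nonneg_left hfeas (inv_nonneg.mpr hρ0.le)
    have hrw : ρ⁻¹ * ((t + β - α) * ρ * Real.log 2) = (t + β - α) * Real.log 2 := by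
      field_simp
    linarith
end
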